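/- The number of pairs (M, x) with M a word of length t over an alphabet Sigma of size q and x a subsequence of M is at most q^t · (F_q(0) + F_q(1) + ... + F_q(t)). -/

import Mathlib

open List Finset

/-- The `q`-bonacci numbers: `F_q(0)=1`, `F_q(t)=2^(t-1)` for `1 ≤ t ≤ q`,
and `F_q(t)` is the sum of the previous `q` terms for `t > q`. -/
def qbonacci (q : ℕ) : ℕ → ℕ
  | 0 => 1
  | t + 1 =>
    if t + 1 ≤ q then 2 ^ t
    else ∑ i ∈ Finset.range q, qbonacci q (t - i)
  decreasing_by exact Nat.lt_succ_of_le (Nat.sub_le t i)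

/-- The length-`t` word cycling through the alphabet `{0, 1, ..., q-1}`. -/
def cyc (q t : ℕ) : List ℕ := (List.range t).map (· % q)

/-- The alternating binary word `0,1,0,1,...` of length `t` (A=0, C=1). -/
def alt (t : ℕ) : List ℕ := (List.range t).map (· % 2)

/-- `tau q x` is the least `s` such that `x` is a subsequence of `cyc q s`. -/
noncomputable def tau (q : ℕ) (x : List ℕ) : ℕ := sInf {s | x <+ cyc q s}

/-- Sum of the first `t+1` q-bonacci numbers. -/
def qbsum (q t : ℕ) : ℕ := ∑ i ∈ Finset.range (t + 1), qbonacci q i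

lemma qbsum_succ (q t : ℕ) : qbsum q (t + 1) = qbsum q t + qbonacci q (t + 1) := by
  simp [qbsum, Finset.sum_range_succ]

lemma qbsum_pow {q t : ℕ} (h : t ≤ q) : qbsum q t = 2 ^ t := by
  induction t with
  | zero => simp [qbsum, qbonacci]
  | succ n ih =>
      rw [qbsum_succ, ih (Nat.le_of_succ_le h), qbonacci]
      rw [if_pos h]
      ring

lemma qbsum_mono {q : ℕ} : Monotone (qbsum q) := by
  intro s t h
  exact Finset.sum_le_sum_of_subset (by simpa using Nat.succ_le_succ h)

lemma geom_two (t : ℕ) : 1 + ∑ i ∈ Finset.range t, 2 ^ i = 2 ^ t := by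
  induction t with
  | zero => simp
  | succ n ih => rw [Finset.sum_range_succ, ← Nat.add_assoc, ih]; ring

lemma qbsum_identity (q : ℕ) : ∀ t : ℕ,
    qbsum q (t + 1) = 1 + ∑ j ∈ Finset.range (min q (t + 1)), qbsum q (t - j) := by
  intro t
  induction t using Nat.strong_induction_on with
  | _ t ih =>
    rcases le_or_gt (t + 1) q with h | h
    · rw [Nat.min_eq_right h, qbsum_pow h]
      have h1 : ∀ j ∈ Finset.range (t + 1), qbsum q (t - j) = 2 ^ (t - j) := fun j _ =>
        qbsum_pow (le_trans (Nat.sub_le t j) (le_trans (Nat.le_succ t) h))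
      rw [Finset.sum_congr rfl h1,
        show (∑ x ∈ Finset.range (t+1), 2 ^ (t - x)) = ∑ x ∈ Finset.range (t+1), 2 ^ x from by
          simpa using (Finset.sum_range_reflect (fun i => (2:ℕ) ^ i) (t+1)),
        geom_two]
    · have hqt : q ≤ t := Nat.lt_succ_iff.mp h
      have hq : min q (t + 1) = q := Nat.min_eq_left (Nat.le_succ_of_le hqt)
      rw [hq]
      rcases Nat.eq_zero_or_pos q with rfl | hq1
      · simp only [Finset.range_zero, Finset.sum_empty, Nat.add_zero]
        clear ih h hq hqt
        induction t with
        | zero => rw [qbsum_succ]; simp [qbsum, qbonacci]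
        | succ s ihs => rw [qbsum_succ, ihs]; simp [qbonacci]
      · obtain ⟨s, rfl⟩ : ∃ s, t = s + 1 :=
          ⟨t - 1, (Nat.succ_pred_eq_of_pos (lt_of_lt_of_le hq1 hqt)).symm⟩
        have hqs : q ≤ s + 1 := hqt
        have key : ∀ j ∈ Finset.range q,
            qbsum q (s + 1 - j) = qbsum q (s - j) + qbonacci q ((s - j) + 1) := by
          intro j hj
          have hjs : j ≤ s := Nat.lt_succ_iff.mp (lt_of_lt_of_le (Finset.mem_range.mp hj) hqs)
          rw [Nat.succ_sub hjs, qbsum_succ]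
        rw [Finset.sum_congr rfl key, Finset.sum_add_distrib]
        have rec1 : qbonacci q (s + 1 + 1) = ∑ i ∈ Finset.range q, qbonacci q ((s - i) + 1) := by
          rw [qbonacci, if_neg (by omega)]
          refine Finset.sum_congr rfl fun i hi => ?_
          have : i ≤ s := Nat.lt_succ_iff.mp (lt_of_lt_of_le (Finset.mem_range.mp hi) hqs)
          rw [Nat.succ_sub this]
        have ihs : qbsum q (s + 1) = 1 + ∑ j ∈ Finset.range q, qbsum q (s - j) := by
          have := ih s (Nat.lt_succ_self s)
          rwa [Nat.min_eq_left hqs] at this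
        rw [qbsum_succ, ihs, rec1]
        ring

lemma sum_le_range_of_antitone {h : ℕ → ℕ} (hh : Antitone h) :
    ∀ (s : Finset ℕ), ∑ i ∈ s, h i ≤ ∑ j ∈ Finset.range s.card, h j := by
  intro s
  induction s using Finset.strongInduction with
  | _ s ih =>
    rcases Finset.eq_empty_or_nonempty s with rfl | hs
    · simp
    · have hm : s.max' hs ∈ s := s.max'_mem hs
      have hcard : (s.erase (s.max' hs)).card = s.card - 1 := Finset.card_erase_of_mem hm
      obtain ⟨n, hn⟩ : ∃ n, s.card = n + 1 :=
        ⟨s.card - 1, (Nat.succ_pred_eq_of_pos (Finset.card_pos.mpr hs)).symm⟩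
      have hsub : s ⊆ Finset.range (s.max' hs + 1) := by
        intro x hx; exact Finset.mem_range.mpr (Nat.lt_succ_of_le (s.le_max' x hx))
      have hmax : n ≤ s.max' hs := by
        have := Finset.card_le_card hsub
        simp only [Finset.card_range] at this
        omega
      calc ∑ i ∈ s, h i = h (s.max' hs) + ∑ i ∈ s.erase (s.max' hs), h i :=
            (Finset.add_sum_erase s h hm).symm
        _ ≤ h n + ∑ j ∈ Finset.range n, h j := by
            refine Nat.add_le_add (hh hmax) ?_
            have := ih _ (Finset.erase_ssubset hm)
            rwa [hcard, hn, Nat.add_sub_cancel] at this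
        _ = ∑ j ∈ Finset.range s.card, h j := by
            rw [hn, Finset.sum_range_succ, Nat.add_comm]

lemma sublist_drop_indexOf {α : Type*} [DecidableEq α] {a : α} :
    ∀ {M y : List α}, a :: y <+ M → y <+ M.drop (M.idxOf a + 1) := by
  intro M
  induction M with
  | nil => intro y h; exact absurd h (by simp)
  | cons b M ih =>
      intro y h
      rcases List.cons_sublist_cons'.mp h with h' | ⟨rfl, h'⟩
      · by_cases hab : a = b
        · subst hab
          simpa [List.idxOf_cons_self] using (List.sublist_cons_self a y).trans h'
        · simpa [List.idxOf_cons_ne _ (Ne.symm hab)] using ih h'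
      · simpa [List.idxOf_cons_self] using h'

lemma sublists_card_le {α : Type*} [Fintype α] [DecidableEq α] :
    ∀ (n : ℕ) (M : List α), M.length = n →
      M.sublists.toFinset.card ≤ qbsum (Fintype.card α) n := by
  intro n
  induction n using Nat.strong_induction_on with
  | _ n ih =>
    intro M hM
    set q := Fintype.card α with hqdef
    match n, hM with
    | 0, hM =>
        rw [List.length_eq_zero_iff.mp hM]
        simp [qbsum, qbonacci]
    | s + 1, hM =>
        -- the subset decomposition
        have hsub : M.sublists.toFinset ⊆ insert ([] : List α)
            (M.toFinset.biUnion fun a =>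
              ((M.drop (M.idxOf a + 1)).sublists.toFinset).image (a :: ·)) := by
          intro x hx
          rw [List.mem_toFinset, List.mem_sublists] at hx
          match x with
          | [] => exact Finset.mem_insert_self _ _
          | a :: y =>
            refine Finset.mem_insert_of_mem (Finset.mem_biUnion.mpr ⟨a, ?_, ?_⟩)
            · exact List.mem_toFinset.mpr (hx.subset (List.mem_cons_self (a := a) (l := y)))
            · exact Finset.mem_image.mpr ⟨y, by
                rw [List.mem_toFinset, List.mem_sublists]
                exact sublist_drop_indexOf hx, rfl⟩
        have hmem : ∀ a ∈ M.toFinset, a ∈ M := fun a ha => List.mem_toFinset.mp ha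
        have step1 : M.sublists.toFinset.card ≤
            1 + ∑ a ∈ M.toFinset, ((M.drop (M.idxOf a + 1)).sublists.toFinset).card := by
          have h1 := Finset.card_le_card hsub
          have h2 := Finset.card_insert_le ([] : List α) (M.toFinset.biUnion fun a =>
            ((M.drop (M.idxOf a + 1)).sublists.toFinset).image (a :: ·))
          have h3 : (M.toFinset.biUnion fun a =>
              ((M.drop (M.idxOf a + 1)).sublists.toFinset).image (a :: ·)).card ≤
              ∑ a ∈ M.toFinset, ((M.drop (M.idxOf a + 1)).sublists.toFinset).card :=
            le_trans Finset.card_biUnion_le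
              (Finset.sum_le_sum fun a _ => Finset.card_image_le)
          omega
        have step2 : ∀ a ∈ M.toFinset,
            ((M.drop (M.idxOf a + 1)).sublists.toFinset).card ≤
              qbsum q (s - M.idxOf a) := by
          intro a ha
          have hlt : M.idxOf a < M.length := List.idxOf_lt_length_iff.mpr (hmem a ha)
          have hlen : (M.drop (M.idxOf a + 1)).length = s - M.idxOf a := by
            rw [List.length_drop, hM]
            omega
          exact ih (s - M.idxOf a) (by omega) _ hlen
        -- reindex over the set of first-occurrence indices
        set I : Finset ℕ := M.toFinset.image (fun a => M.idxOf a) with hI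
        have hinj : Set.InjOn (fun a => M.idxOf a) M.toFinset := by
          intro x hx y hy hxy
          exact (List.idxOf_inj (hmem x hx)).mp hxy
        have hIcard : I.card = M.toFinset.card := Finset.card_image_of_injOn hinj
        have hIq : I.card ≤ q := by
          rw [hIcard]
          simpa [hqdef] using Finset.card_le_univ M.toFinset
        have hIrange : I ⊆ Finset.range (s + 1) := by
          intro i hi
          obtain ⟨a, ha, rfl⟩ := Finset.mem_image.mp hi
          have := List.idxOf_lt_length_iff.mpr (hmem a ha)
          rw [hM] at this
          exact Finset.mem_range.mpr this
        have hIt : I.card ≤ s + 1 := by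
          simpa using Finset.card_le_card hIrange
        have step3 : ∑ i ∈ I, qbsum q (s - i)
            = ∑ a ∈ M.toFinset, qbsum q (s - M.idxOf a) := by
          rw [hI]
          exact Finset.sum_image fun x hx y hy h => hinj hx hy h
        have hanti : Antitone (fun i => qbsum q (s - i)) := fun i j hij =>
          qbsum_mono (Nat.sub_le_sub_left hij s)
        have step4 : ∑ i ∈ I, qbsum q (s - i) ≤
            ∑ j ∈ Finset.range (min q (s + 1)), qbsum q (s - j) := by
          calc ∑ i ∈ I, qbsum q (s - i)
              ≤ ∑ j ∈ Finset.range I.card, qbsum q (s - j) := sum_le_range_of_antitone hanti I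
            _ ≤ _ := Finset.sum_le_sum_of_subset (by
                intro j hj
                simp only [Finset.mem_range] at hj ⊢
                omega)
        calc M.sublists.toFinset.card
            ≤ 1 + ∑ a ∈ M.toFinset, ((M.drop (M.idxOf a + 1)).sublists.toFinset).card := step1
          _ ≤ 1 + ∑ a ∈ M.toFinset, qbsum q (s - M.idxOf a) :=
              Nat.add_le_add le_rfl (Finset.sum_le_sum step2)
          _ = 1 + ∑ i ∈ I, qbsum q (s - i) := by rw [← step3]
          _ ≤ 1 + ∑ j ∈ Finset.range (min q (s + 1)), qbsum q (s - j) :=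
              Nat.add_le_add le_rfl step4
          _ = qbsum q (s + 1) := (qbsum_identity q s).symm

theorem stmt11 {α : Type*} [Fintype α] (q t : ℕ) (hcard : Fintype.card α = q) :
    {p : List α × List α | p.1.length = t ∧ p.2 <+ p.1}.ncard
      ≤ q ^ t * ∑ i ∈ Finset.range (t + 1), qbonacci q i := by
  classical
  subst hcard
  set q := Fintype.card α with hqdef
  set Words : Finset (List α) :=
    (Finset.univ : Finset (Fin t → α)).image (fun f => List.ofFn f) with hW
  set P : Finset (List α × List α) :=
    Words.biUnion (fun M => (M.sublists.toFinset).image (fun x => (M, x))) with hP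
  have hsubset : {p : List α × List α | p.1.length = t ∧ p.2 <+ p.1} ⊆ ↑P := by
    rintro ⟨M, x⟩ ⟨hlen, hsl⟩
    simp only [Finset.coe_biUnion, Set.mem_iUnion, Finset.mem_coe, hP]
    refine ⟨M, ?_, ?_⟩
    · subst hlen
      exact Finset.mem_image.mpr ⟨M.get, Finset.mem_univ _, List.ofFn_get M⟩
    · exact Finset.mem_image.mpr ⟨x, by
        rw [List.mem_toFinset, List.mem_sublists]; exact hsl, rfl⟩
  have hncard : {p : List α × List α | p.1.length = t ∧ p.2 <+ p.1}.ncard ≤ P.card := by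
    have := Set.ncard_le_ncard hsubset P.finite_toSet
    rwa [Set.ncard_coe_finset] at this
  refine le_trans hncard ?_
  have hwordlen : ∀ M ∈ Words, M.length = t := by
    intro M hM
    obtain ⟨f, _, rfl⟩ := Finset.mem_image.mp hM
    exact List.length_ofFn (f := f)
  have hWcard : Words.card ≤ q ^ t := by
    calc Words.card ≤ (Finset.univ : Finset (Fin t → α)).card := Finset.card_image_le
      _ = q ^ t := by simp [hqdef, Fintype.card_fun]
  calc P.card ≤ ∑ M ∈ Words, ((M.sublists.toFinset).image (fun x => (M, x))).card :=
        Finset.card_biUnion_le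
    _ ≤ ∑ M ∈ Words, qbsum q t := Finset.sum_le_sum fun M hM =>
        le_trans Finset.card_image_le (sublists_card_le t M (hwordlen M hM))
    _ = Words.card * qbsum q t := by rw [Finset.sum_const, smul_eq_mul]
    _ ≤ q ^ t * qbsum q t := Nat.mul_le_mul_right _ hWcard
    _ = q ^ t * ∑ i ∈ Finset.range (t + 1), qbonacci q i := rfl
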